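/- For a stable modular Σ-module E (i.e., E(g,n) = 0 whenever 2g + n − 1 ≤ 0) and fixed g ≥ 0, n ≥ −1, there are only finitely many isomorphism classes of stable labeled graphs of genus g with legs labeled by {0,…,n}; consequently the sum MM E(g,n) = ⊕_{[Γ]} E⟨⟨Γ⟩⟩_{Aut(Γ)} over isomorphism classes of such graphs is a finite direct sum. -/

import Mathlib

set_option autoImplicit false

namespace OperadPaper

/-- A (vertex-labeled, leg-labeled) graph in the sense of Getzler–Kapranov:  a finite
set of flags with an involution and a partition into (finitely many, possibly empty)
blocks — given here by the map `bd` to a finite set of vertices — together with a genus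
map on vertices and a labeling of the legs (the fixed flags of the involution) by
`Fin L` (representing `{0, …, n}` with `L = n + 1`). -/
structure LabGraph (L : ℕ) where
  Flag : Type
  Vert : Type
  [fF : Fintype Flag]
  [fV : Fintype Vert]
  [dF : DecidableEq Flag]
  [dV : DecidableEq Vert]
  bd : Flag → Vert
  inv : Flag → Flag
  invol : Function.Involutive inv
  gen : Vert → ℕ
  lab : { x : Flag // inv x = x } ≃ Fin L

attribute [instance] LabGraph.fF LabGraph.fV LabGraph.dF LabGraph.dV

variable {L : ℕ}

/-- Two vertices are adjacent if some edge connects them. -/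
def LabGraph.adj (Γ : LabGraph L) (v w : Γ.Vert) : Prop :=
  ∃ x : Γ.Flag, Γ.bd x = v ∧ Γ.bd (Γ.inv x) = w

/-- Connectedness of the geometric realization. -/
def LabGraph.Connected (Γ : LabGraph L) : Prop :=
  ∀ v w : Γ.Vert, Relation.ReflTransGen Γ.adj v w

/-- The number of edges (two-cycles of the involution). -/
def LabGraph.numEdges (Γ : LabGraph L) : ℕ :=
  (Finset.univ.filter (fun x : Γ.Flag => Γ.inv x ≠ x)).card / 2

/-- The genus `g(Γ) = b_1(Γ) + ∑_v g(v)`, where for a connected graph the first Betti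
number is `b_1(Γ) = #edges − #vertices + 1`. -/
def LabGraph.genus (Γ : LabGraph L) : ℕ :=
  Γ.numEdges + 1 + (∑ v, Γ.gen v) - Fintype.card Γ.Vert

/-- The number of flags adjacent to a vertex. -/
def LabGraph.deg (Γ : LabGraph L) (v : Γ.Vert) : ℕ :=
  (Finset.univ.filter (fun x : Γ.Flag => Γ.bd x = v)).card

/-- Stability: `2(g(v) − 1) + |edge(v)| > 0` at every vertex. -/
def LabGraph.Stable (Γ : LabGraph L) : Prop :=
  ∀ v : Γ.Vert, 2 < 2 * Γ.gen v + Γ.deg v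

/-- Isomorphism of labeled graphs:  bijections of flags and vertices commuting with the
boundary maps and the involutions and preserving the genus labels and the leg labels. -/
def LabGraph.Iso (Γ₁ Γ₂ : LabGraph L) : Prop :=
  ∃ (φ : Γ₁.Flag ≃ Γ₂.Flag) (ψ : Γ₁.Vert ≃ Γ₂.Vert),
    (∀ x, Γ₂.bd (φ x) = ψ (Γ₁.bd x)) ∧
    (∀ x, Γ₂.inv (φ x) = φ (Γ₁.inv x)) ∧
    (∀ v, Γ₂.gen (ψ v) = Γ₁.gen v) ∧
    (∀ (x : { x : Γ₁.Flag // Γ₁.inv x = x }) (y : { y : Γ₂.Flag // Γ₂.inv y = y }),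
      φ x.1 = y.1 → Γ₂.lab y = Γ₁.lab x)

/-! ### Auxiliary material for the proof -/

section Aux

set_option synthInstance.maxSize 400
set_option synthInstance.maxHeartbeats 800000

/-- A "code" for a labeled graph whose flags, vertices and genera are all bounded. -/
structure Code (L B V G : ℕ) where
  nf : Fin (B+1)
  nv : Fin (V+1)
  bd : Fin nf → Fin nv
  inv : Fin nf → Fin nf
  invol : ∀ x, inv (inv x) = x
  gen : Fin nv → Fin (G+1)
  lab : { x : Fin nf // inv x = x } ≃ Fin L
  deriving Fintype

end Aux

/-- Decode a code into a labeled graph. -/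
def Code.decode {L B V G : ℕ} (c : Code L B V G) : LabGraph L where
  Flag := Fin c.nf
  Vert := Fin c.nv
  bd := c.bd
  inv := c.inv
  invol := c.invol
  gen := fun v => (c.gen v : ℕ)
  lab := c.lab

lemma card_flag_eq_sum_deg (Γ : LabGraph L) :
    Fintype.card Γ.Flag = ∑ v, Γ.deg v := by
  rw [← Finset.card_univ]
  exact Finset.card_eq_sum_card_fiberwise (fun x _ => Finset.mem_univ (Γ.bd x))

lemma stable_sum (Γ : LabGraph L) (hS : Γ.Stable) :
    3 * Fintype.card Γ.Vert ≤ 2 * (∑ v, Γ.gen v) + Fintype.card Γ.Flag := by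
  have h1 : ∑ v : Γ.Vert, (3 : ℕ) ≤ ∑ v : Γ.Vert, (2 * Γ.gen v + Γ.deg v) :=
    Finset.sum_le_sum (fun v _ => hS v)
  have h2 : ∑ v : Γ.Vert, (2 * Γ.gen v + Γ.deg v)
      = 2 * (∑ v, Γ.gen v) + ∑ v, Γ.deg v := by
    rw [Finset.sum_add_distrib, Finset.mul_sum]
  rw [card_flag_eq_sum_deg]
  calc 3 * Fintype.card Γ.Vert = ∑ _v : Γ.Vert, (3 : ℕ) := by
        simp [Finset.sum_const, Finset.card_univ, mul_comm]
    _ ≤ _ := by rw [h2] at h1; exact h1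

lemma card_fixed (Γ : LabGraph L) :
    (Finset.univ.filter (fun x : Γ.Flag => Γ.inv x = x)).card = L := by
  rw [← Fintype.card_subtype]
  simpa using Fintype.card_congr Γ.lab

lemma card_flag_le (Γ : LabGraph L) :
    Fintype.card Γ.Flag ≤ 2 * Γ.numEdges + 1 + L := by
  have hsplit := Finset.card_filter_add_card_filter_not
    (s := (Finset.univ : Finset Γ.Flag)) (p := fun x => Γ.inv x = x)
  rw [card_fixed] at hsplit
  have hE : Γ.numEdges
      = (Finset.univ.filter (fun a : Γ.Flag => ¬ Γ.inv a = a)).card / 2 := by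
    simp only [LabGraph.numEdges, ne_eq]
  rw [Finset.card_univ] at hsplit
  omega

/-- The size bounds coming from stability and the genus. -/
lemma bounds (g : ℕ) (Γ : LabGraph L) (hS : Γ.Stable) (hg : Γ.genus = g) :
    Fintype.card Γ.Flag ≤ 6*g + 3*L + 1 ∧
    Fintype.card Γ.Vert ≤ 2*g + L ∧
    ∀ v, Γ.gen v ≤ 3*g + L := by
  have h1 := stable_sum Γ hS
  have h2 := card_flag_le Γ
  have h3 : Γ.numEdges + 1 + (∑ v, Γ.gen v) - Fintype.card Γ.Vert = g := hg
  refine ⟨by omega, by omega, fun v => ?_⟩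
  have h4 : Γ.gen v ≤ ∑ v, Γ.gen v :=
    Finset.single_le_sum (f := Γ.gen) (fun _ _ => Nat.zero_le _) (Finset.mem_univ v)
  omega

/-- For fixed `g ≥ 0` and a fixed finite set of leg labels
`{0, …, n}` (of cardinality `L = n + 1 ≥ 0`), there are only finitely many isomorphism
classes of stable labeled (connected) graphs of genus `g` with legs labeled by
`{0, …, n}`:  there is a finite list of such graphs meeting every isomorphism class.
(Consequently, for a stable modular `Σ`-module `E`, the sum
`𝕄E(g,n) = ⊕_{[Γ]} E⟨⟨Γ⟩⟩_{Aut Γ}` is a finite direct sum.) -/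
theorem finitely_many_stable_graphs (g L : ℕ) :
    ∃ (N : ℕ) (reps : Fin N → LabGraph L),
      ∀ Γ : LabGraph L, Γ.Connected → Γ.Stable → Γ.genus = g →
        ∃ i, LabGraph.Iso Γ (reps i) := by
  set B := 6*g + 3*L + 1 with hB
  set V := 2*g + L with hV
  set G := 3*g + L with hG
  refine ⟨Fintype.card (Code L B V G),
    fun i => Code.decode ((Fintype.equivFin (Code L B V G)).symm i), ?_⟩
  intro Γ _hC hS hg
  obtain ⟨hF, hVert, hgen⟩ := bounds g Γ hS hg
  set e := Fintype.equivFin Γ.Flag with he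
  set e' := Fintype.equivFin Γ.Vert with he'
  have hcond : ∀ x : Fin (Fintype.card Γ.Flag),
      (fun y => e (Γ.inv (e.symm y))) x = x ↔ Γ.inv (e.symm x) = e.symm x := by
    intro x
    constructor
    · intro h
      have := congrArg e.symm h
      simpa using this
    · intro h
      simp [h]
  refine ?_
  set c : Code L B V G :=
    { nf := ⟨Fintype.card Γ.Flag, by omega⟩
      nv := ⟨Fintype.card Γ.Vert, by omega⟩
      bd := fun x => e' (Γ.bd (e.symm x))
      inv := fun x => e (Γ.inv (e.symm x))
      invol := by intro x; simp [Γ.invol (e.symm x)]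
      gen := fun v => ⟨Γ.gen (e'.symm v), by have := hgen (e'.symm v); omega⟩
      lab := (Equiv.subtypeEquiv e.symm (fun x => hcond x)).trans Γ.lab } with hc
  refine ⟨Fintype.equivFin (Code L B V G) c, ?_⟩
  simp only [Equiv.symm_apply_apply]
  refine ⟨e, e', ?_, ?_, ?_, ?_⟩
  · intro x
    show e' (Γ.bd (e.symm (e x))) = e' (Γ.bd x)
    simp
  · intro x
    show e (Γ.inv (e.symm (e x))) = e (Γ.inv x)
    simp
  · intro v
    show (Γ.gen (e'.symm (e' v)) : ℕ) = Γ.gen v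
    simp
  · intro x y h
    show ((Equiv.subtypeEquiv e.symm (fun x => hcond x)).trans Γ.lab) y = Γ.lab x
    simp only [Equiv.trans_apply]
    apply congrArg Γ.lab
    apply Subtype.ext
    show e.symm y.1 = x.1
    rw [← h]
    exact e.symm_apply_apply x.1

end OperadPaper
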